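/- For each real number u ≥ 2 let X_u° := ⋃_{n=1}^∞ (2^{u^n}, 2^{u^n} + u^n) ⊆ ℝ (a union of open intervals). If 2 ≤ v < w are real numbers, then there is no uniformly continuous bijection from X_v° onto X_w°. -/

import Mathlib

open Set

/-- The set `X_u° = ⋃_{n≥1} (2^{uⁿ}, 2^{uⁿ} + uⁿ)`. -/
noncomputable def XuOpen (u : ℝ) : Set ℝ :=
  ⋃ n ∈ Set.Ici (1 : ℕ), Set.Ioo ((2 : ℝ) ^ (u ^ n)) ((2 : ℝ) ^ (u ^ n) + u ^ n)

noncomputable def ap (u : ℝ) (n : ℕ) : ℝ := (2:ℝ) ^ (u ^ n)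
noncomputable def Iv (u : ℝ) (n : ℕ) : Set ℝ := Set.Ioo (ap u n) (ap u n + u ^ n)

lemma mem_xu {u x : ℝ} : x ∈ XuOpen u ↔ ∃ n, 1 ≤ n ∧ x ∈ Iv u n := by
  simp only [XuOpen, Iv, ap, Set.mem_iUnion, Set.mem_Ici, Set.mem_Ioo, exists_prop]

lemma le_two_rpow {x : ℝ} (hx : 0 ≤ x) : x ≤ (2:ℝ) ^ x := by
  have h1 : x < (⌊x⌋₊ : ℝ) + 1 := Nat.lt_floor_add_one x
  have h2 : (⌊x⌋₊ : ℝ) + 1 ≤ (2:ℝ) ^ (⌊x⌋₊ : ℕ) := by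
    have := Nat.lt_two_pow_self (n := ⌊x⌋₊)
    exact_mod_cast Nat.succ_le_of_lt this
  have h3 : ((2:ℝ) ^ (⌊x⌋₊ : ℕ) : ℝ) = (2:ℝ) ^ ((⌊x⌋₊ : ℕ) : ℝ) := by
    rw [Real.rpow_natCast]
  have h4 : (2:ℝ) ^ ((⌊x⌋₊ : ℕ) : ℝ) ≤ (2:ℝ) ^ x :=
    Real.rpow_le_rpow_of_exponent_le one_le_two (Nat.floor_le hx)
  linarith [h3 ▸ h2]

lemma iv_subset {u : ℝ} {n : ℕ} (hn : 1 ≤ n) : Iv u n ⊆ XuOpen u := fun x hx =>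
  mem_xu.mpr ⟨n, hn, hx⟩

lemma two_le_pow {u : ℝ} (hu : 2 ≤ u) {n : ℕ} (hn : 1 ≤ n) : 2 ≤ u ^ n := by
  calc (2:ℝ) ≤ u := hu
  _ = u ^ 1 := (pow_one u).symm
  _ ≤ u ^ n := pow_le_pow_right₀ (by linarith) hn

lemma ap_succ {u : ℝ} (hu : 2 ≤ u) {n : ℕ} (hn : 1 ≤ n) :
    ap u n + u ^ n ≤ ap u (n+1) := by
  have hun : (2:ℝ) ≤ u ^ n := two_le_pow hu hn
  have h2 : u ^ n + u ^ n ≤ u ^ (n+1) := by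
    rw [pow_succ]; nlinarith
  have hA : u ^ n ≤ (2:ℝ) ^ (u ^ n) := le_two_rpow (by linarith)
  have hA4 : (4:ℝ) ≤ (2:ℝ) ^ (u ^ n) := by
    have : ((2:ℝ) ^ ((2:ℕ) : ℝ)) ≤ (2:ℝ) ^ (u ^ n) :=
      Real.rpow_le_rpow_of_exponent_le one_le_two (by exact_mod_cast hun)
    rw [Real.rpow_natCast] at this; norm_num at this; linarith
  have hmul : (2:ℝ) ^ (u ^ n + u ^ n) = (2:ℝ) ^ (u ^ n) * (2:ℝ) ^ (u ^ n) :=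
    Real.rpow_add (by norm_num) _ _
  have hle : (2:ℝ) ^ (u ^ n + u ^ n) ≤ ap u (n+1) :=
    Real.rpow_le_rpow_of_exponent_le one_le_two h2
  have : ap u n + u ^ n ≤ (2:ℝ) ^ (u ^ n) * (2:ℝ) ^ (u ^ n) := by
    unfold ap; nlinarith
  rw [hmul] at hle; linarith

lemma ap_mono {u : ℝ} (hu : 2 ≤ u) {m k : ℕ} (hmk : m ≤ k) : ap u m ≤ ap u k :=
  Real.rpow_le_rpow_of_exponent_le one_le_two (pow_le_pow_right₀ (by linarith) hmk)

lemma ap_gap {u : ℝ} (hu : 2 ≤ u) {m k : ℕ} (hm : 1 ≤ m) (hmk : m < k) :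
    ap u m + u ^ m ≤ ap u k :=
  (ap_succ hu hm).trans (ap_mono hu hmk)

lemma not_cross {u : ℝ} (hu : 2 ≤ u) {C : Set ℝ} (hC : IsPreconnected C)
    (hCs : C ⊆ XuOpen u) {m k : ℕ} {x y : ℝ} (hm : 1 ≤ m) (hmk : m < k)
    (hx : x ∈ C) (hxm : x ∈ Iv u m) (hy : y ∈ C) (hyk : y ∈ Iv u k) : False := by
  have hOC := hC.ordConnected
  have hxt : x < ap u k := lt_of_lt_of_le hxm.2 (ap_gap hu hm hmk)
  have hty : ap u k < y := hyk.1
  have htC : ap u k ∈ C := hOC.out hx hy ⟨hxt.le, hty.le⟩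
  obtain ⟨j, hj1, htj⟩ := mem_xu.mp (hCs htC)
  rcases lt_or_ge j k with h | h
  · exact absurd htj.2 (not_lt.2 (ap_gap hu hj1 h))
  · exact absurd htj.1 (not_lt.2 (ap_mono hu h))

lemma connected_unique {u : ℝ} (hu : 2 ≤ u) {C : Set ℝ} (hC : IsPreconnected C)
    (hCs : C ⊆ XuOpen u) {m k : ℕ} {x y : ℝ} (hm : 1 ≤ m) (hk : 1 ≤ k)
    (hx : x ∈ C) (hxm : x ∈ Iv u m) (hy : y ∈ C) (hyk : y ∈ Iv u k) : m = k := by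
  rcases lt_trichotomy m k with h | h | h
  · exact absurd (not_cross hu hC hCs hm h hx hxm hy hyk) not_false
  · exact h
  · exact absurd (not_cross hu hC hCs hk h hy hyk hx hxm) not_false

lemma iv_unique {u : ℝ} (hu : 2 ≤ u) {m k : ℕ} {x : ℝ} (hm : 1 ≤ m) (hk : 1 ≤ k)
    (hxm : x ∈ Iv u m) (hxk : x ∈ Iv u k) : m = k :=
  connected_unique hu isPreconnected_singleton (by
    intro z hz; rw [Set.mem_singleton_iff] at hz; subst hz; exact iv_subset hm hxm)
    hm hk rfl hxm rfl hxk

lemma chain_bound_mono {F : ℝ → ℝ} {s : Set ℝ} (hs : s.OrdConnected) {δ : ℝ} (hδ : 0 < δ)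
    (h1 : ∀ x ∈ s, ∀ y ∈ s, |x - y| < δ → |F x - F y| ≤ 1) :
    ∀ k : ℕ, ∀ x ∈ s, ∀ y ∈ s, x ≤ y → y - x ≤ k * (δ/2) → |F x - F y| ≤ k := by
  intro k
  induction k with
  | zero =>
    intro x hx y hy hxy h
    have : x = y := by norm_num at h; linarith
    simp [this]
  | succ k ih =>
    intro x hx y hy hxy h
    by_cases hsmall : y - x < δ
    · have := h1 x hx y hy (by rw [abs_sub_comm, abs_of_nonneg (by linarith)]; linarith)
      have hk : (0:ℝ) ≤ (k:ℝ) := Nat.cast_nonneg k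
      push_cast; linarith
    · push_neg at hsmall
      set z := y - δ/2 with hz
      have hxz : x ≤ z := by simp only [hz]; linarith
      have hzy : z ≤ y := by simp only [hz]; linarith
      have hzs : z ∈ s := hs.out hx hy ⟨hxz, hzy⟩
      have hIH : |F x - F z| ≤ k := by
        apply ih x hx z hzs hxz
        push_cast at h ⊢; simp only [hz]; linarith
      have hlast : |F z - F y| ≤ 1 :=
        h1 z hzs y hy (by rw [hz]; rw [abs_of_nonpos (by linarith)]; linarith)
      calc |F x - F y| ≤ |F x - F z| + |F z - F y| := abs_sub_le _ _ _
        _ ≤ k + 1 := add_le_add hIH hlast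
        _ = ((k+1 : ℕ) : ℝ) := by push_cast; ring

lemma chain_bound {F : ℝ → ℝ} {s : Set ℝ} (hs : s.OrdConnected) {δ : ℝ} (hδ : 0 < δ)
    (h1 : ∀ x ∈ s, ∀ y ∈ s, |x - y| < δ → |F x - F y| ≤ 1)
    (k : ℕ) {x y : ℝ} (hx : x ∈ s) (hy : y ∈ s) (h : |x - y| ≤ k * (δ/2)) :
    |F x - F y| ≤ k := by
  rcases le_total x y with hxy | hxy
  · exact chain_bound_mono hs hδ h1 k x hx y hy hxy
      (by rwa [abs_sub_comm, abs_of_nonneg (by linarith)] at h)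
  · rw [abs_sub_comm]
    exact chain_bound_mono hs hδ h1 k y hy x hx hxy
      (by rwa [abs_of_nonneg (by linarith)] at h)

/-- If `2 ≤ v < w` then there is no uniformly continuous
bijection from `X_v°` onto `X_w°`. -/
theorem stmt_2 (v w : ℝ) (hv : 2 ≤ v) (hvw : v < w) :
    ¬ ∃ f : ↥(XuOpen v) → ↥(XuOpen w), Function.Bijective f ∧ UniformContinuous f := by
  rintro ⟨f, ⟨hfinj, hfsurj⟩, hfu⟩
  have hw : 2 ≤ w := hv.trans hvw.le
  classical
  set F : ℝ → ℝ := fun x => if h : x ∈ XuOpen v then (f ⟨x, h⟩ : ℝ) else 0 with hFdef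
  have hFval : ∀ (x : ℝ) (h : x ∈ XuOpen v), F x = (f ⟨x, h⟩ : ℝ) := fun x h => dif_pos h
  have hFmem : ∀ x ∈ XuOpen v, F x ∈ XuOpen w := fun x h => by
    rw [hFval x h]; exact (f ⟨x, h⟩).2
  have hFinj : Set.InjOn F (XuOpen v) := by
    intro x hx y hy hxy
    rw [hFval x hx, hFval y hy] at hxy
    have := hfinj (Subtype.ext hxy)
    exact congrArg Subtype.val this
  have hFsurjOn : ∀ y ∈ XuOpen w, ∃ x ∈ XuOpen v, F x = y := by
    intro y hy
    obtain ⟨x, hx⟩ := hfsurj ⟨y, hy⟩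
    exact ⟨x.1, x.2, by rw [hFval x.1 x.2]; exact congrArg Subtype.val hx⟩
  have hFcont : ContinuousOn F (XuOpen v) := by
    rw [continuousOn_iff_continuous_restrict]
    have heq : (XuOpen v).restrict F = fun p => (f p : ℝ) :=
      funext fun p => hFval p.1 p.2
    rw [show (XuOpen v).domRestrict F = fun p => (f p : ℝ) from funext fun p => hFval p.1 p.2]
    exact continuous_subtype_val.comp hfu.continuous
  obtain ⟨δ, hδ0, hδ⟩ := Metric.uniformContinuous_iff.mp hfu 1 one_pos
  have hUC : ∀ x ∈ XuOpen v, ∀ y ∈ XuOpen v, |x - y| < δ → |F x - F y| ≤ 1 := by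
    intro x hx y hy hxy
    have hd : dist (⟨x, hx⟩ : ↥(XuOpen v)) ⟨y, hy⟩ < δ := by
      rw [Subtype.dist_eq, Real.dist_eq]; exact hxy
    have h2 := hδ hd
    rw [Subtype.dist_eq, Real.dist_eq] at h2
    rw [hFval x hx, hFval y hy]; exact h2.le
  -- diameter bound
  have hDiam : ∀ n, 1 ≤ n → ∀ x ∈ Iv v n, ∀ y ∈ Iv v n, |F x - F y| ≤ 2 * v ^ n / δ + 1 := by
    intro n hn x hx y hy
    have hsub : Iv v n ⊆ XuOpen v := iv_subset hn
    have hvn : (0:ℝ) < v ^ n := by positivity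
    set k := ⌈2 * v ^ n / δ⌉₊ with hk
    have hxy : |x - y| ≤ k * (δ / 2) := by
      have h1 : |x - y| ≤ v ^ n := by
        rw [abs_sub_le_iff]
        constructor <;> [skip; skip] <;>
          · obtain ⟨ha, hb⟩ := hx; obtain ⟨hc, hd⟩ := hy; linarith
      have h2 : 2 * v ^ n / δ ≤ (k : ℝ) := Nat.le_ceil _
      have h3 : v ^ n = (2 * v ^ n / δ) * (δ / 2) := by field_simp
      have h4 : (2 * v ^ n / δ) * (δ / 2) ≤ (k : ℝ) * (δ / 2) :=
        mul_le_mul_of_nonneg_right h2 (by linarith)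
      linarith
    have hcb := chain_bound (Set.ordConnected_Ioo) hδ0
      (fun a ha b hb hab => hUC a (hsub ha) b (hsub hb) hab) k hx hy hxy
    have hceil : (k : ℝ) ≤ 2 * v ^ n / δ + 1 :=
      (Nat.ceil_lt_add_one (by positivity)).le
    linarith
  -- assignment of target intervals
  have hassign : ∀ n : ℕ, ∃ m : ℕ, 1 ≤ n → (1 ≤ m ∧ F '' Iv v n ⊆ Iv w m) := by
    intro n
    by_cases hn : 1 ≤ n
    · have hvn : (0:ℝ) < v ^ n := by positivity
      have hne : (Iv v n).Nonempty := ⟨ap v n + v ^ n / 2, by constructor <;> simp <;> linarith⟩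
      obtain ⟨x0, hx0⟩ := hne
      have hC : IsPreconnected (F '' Iv v n) :=
        (isPreconnected_Ioo).image F (hFcont.mono (iv_subset hn))
      have hCX : F '' Iv v n ⊆ XuOpen w := by
        rintro - ⟨t, ht, rfl⟩; exact hFmem t (iv_subset hn ht)
      obtain ⟨m, hm1, hFx0⟩ := mem_xu.mp (hFmem x0 (iv_subset hn hx0))
      refine ⟨m, fun _ => ⟨hm1, ?_⟩⟩
      rintro - ⟨y, hy, rfl⟩
      obtain ⟨j, hj1, hFyj⟩ := mem_xu.mp (hFmem y (iv_subset hn hy))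
      have hjm : j = m := connected_unique hw hC hCX hj1 hm1
        (Set.mem_image_of_mem F hy) hFyj (Set.mem_image_of_mem F hx0) hFx0
      exact hjm ▸ hFyj
    · exact ⟨1, fun h => absurd h hn⟩
  choose g hg using hassign
  -- covering lemma: points of Iv w m come from some Iv v n with g n = m
  have hcover : ∀ m, 1 ≤ m → ∀ y ∈ Iv w m, ∃ n, 1 ≤ n ∧ g n = m ∧ y ∈ F '' Iv v n := by
    intro m hm y hy
    obtain ⟨x, hxX, hFx⟩ := hFsurjOn y (iv_subset hm hy)
    obtain ⟨n, hn1, hxn⟩ := mem_xu.mp hxX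
    have hFxm : F x ∈ Iv w (g n) := (hg n hn1).2 (Set.mem_image_of_mem F hxn)
    have hyn : y ∈ Iv w (g n) := hFx ▸ hFxm
    have hgnm : g n = m := iv_unique hw (hg n hn1).1 hm hyn hy
    exact ⟨n, hn1, hgnm, x, hxn, hFx⟩
  -- openness of images
  have hopen : ∀ n, 1 ≤ n → IsOpen (F '' Iv v n) := by
    intro n hn
    rw [isOpen_iff_mem_nhds]
    rintro - ⟨x, hx, rfl⟩
    obtain ⟨hax, hxb⟩ := hx
    set x1 := (ap v n + x) / 2 with hx1def
    set x2 := (x + (ap v n + v ^ n)) / 2 with hx2def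
    have hax1 : ap v n < x1 := by rw [hx1def]; linarith
    have hx1x : x1 < x := by rw [hx1def]; linarith
    have hxx2 : x < x2 := by rw [hx2def]; linarith
    have hx2b : x2 < ap v n + v ^ n := by rw [hx2def]; linarith
    have hIcc : Set.Icc x1 x2 ⊆ Iv v n := Set.Icc_subset_Ioo hax1 hx2b
    have hIccX : Set.Icc x1 x2 ⊆ XuOpen v := hIcc.trans (iv_subset hn)
    have hx1I : x1 ∈ Set.Icc x1 x2 := Set.left_mem_Icc.mpr (by linarith)
    have hxI : x ∈ Set.Icc x1 x2 := ⟨hx1x.le, hxx2.le⟩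
    have hx2I : x2 ∈ Set.Icc x1 x2 := Set.right_mem_Icc.mpr (by linarith)
    have hord : (F '' Iv v n).OrdConnected :=
      ((isPreconnected_Ioo).image F (hFcont.mono (iv_subset hn))).ordConnected
    have hx1mem : F x1 ∈ F '' Iv v n := Set.mem_image_of_mem F (hIcc hx1I)
    have hx2mem : F x2 ∈ F '' Iv v n := Set.mem_image_of_mem F (hIcc hx2I)
    rcases ContinuousOn.strictMonoOn_of_injOn_Icc' (by linarith : x1 ≤ x2)
        (hFcont.mono hIccX) (hFinj.mono hIccX) with hm | hm
    · have h1 : F x1 < F x := hm hx1I hxI hx1x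
      have h2 : F x < F x2 := hm hxI hx2I hxx2
      have hsub2 : Set.Ioo (F x1) (F x2) ⊆ F '' Iv v n := fun z hz =>
        hord.out hx1mem hx2mem ⟨hz.1.le, hz.2.le⟩
      exact Filter.mem_of_superset (Ioo_mem_nhds h1 h2) hsub2
    · have h1 : F x2 < F x := hm hxI hx2I hxx2
      have h2 : F x < F x1 := hm hx1I hxI hx1x
      have hsub2 : Set.Ioo (F x2) (F x1) ⊆ F '' Iv v n := fun z hz =>
        hord.out hx2mem hx1mem ⟨hz.1.le, hz.2.le⟩
      exact Filter.mem_of_superset (Ioo_mem_nhds h1 h2) hsub2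
  -- disjointness of images
  have hdisj : ∀ n1 n2, 1 ≤ n1 → 1 ≤ n2 → n1 ≠ n2 →
      ∀ y, y ∈ F '' Iv v n1 → y ∈ F '' Iv v n2 → False := by
    rintro n1 n2 h1 h2 hne - ⟨a1, ha1, rfl⟩ ⟨a2, ha2, he⟩
    have : a2 = a1 := hFinj (iv_subset h2 ha2) (iv_subset h1 ha1) he
    subst this
    exact hne (iv_unique hv h1 h2 ha1 ha2)
  -- injectivity of g
  have hginj : ∀ n1 n2, 1 ≤ n1 → 1 ≤ n2 → g n1 = g n2 → n1 = n2 := by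
    intro n1 n2 h1 h2 he
    by_contra hne
    set m := g n1 with hmdef
    have hm1 : 1 ≤ m := (hg n1 h1).1
    have hJ : IsPreconnected (Iv w m) := isPreconnected_Ioo
    set U := F '' Iv v n1 with hU
    set V := ⋃ n ∈ {n : ℕ | 1 ≤ n ∧ g n = m ∧ n ≠ n1}, F '' Iv v n with hV
    have hUopen : IsOpen U := hopen n1 h1
    have hVopen : IsOpen V := isOpen_biUnion fun n hn => hopen n hn.1
    have hsubUV : Iv w m ⊆ U ∪ V := by
      intro y hy
      obtain ⟨n, hn1, hgn, hyn⟩ := hcover m hm1 y hy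
      by_cases hnn : n = n1
      · left; show y ∈ F '' Iv v n1; exact hnn ▸ hyn
      · right; exact Set.mem_biUnion ⟨hn1, hgn, hnn⟩ hyn
    have hvn1 : (0:ℝ) < v ^ n1 := by positivity
    have hvn2 : (0:ℝ) < v ^ n2 := by positivity
    have hUne : (Iv w m ∩ U).Nonempty := by
      refine ⟨F (ap v n1 + v ^ n1 / 2), ?_, Set.mem_image_of_mem F ?_⟩
      · exact (hg n1 h1).2 (Set.mem_image_of_mem F (by constructor <;> simp <;> linarith))
      · constructor <;> simp <;> linarith
    have hx2mem : ap v n2 + v ^ n2 / 2 ∈ Iv v n2 := by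
      constructor <;> simp <;> linarith
    have hVne : (Iv w m ∩ V).Nonempty := by
      refine ⟨F (ap v n2 + v ^ n2 / 2), ?_, ?_⟩
      · have h3 := (hg n2 h2).2 (Set.mem_image_of_mem F hx2mem)
        rwa [← he] at h3
      · exact Set.mem_biUnion ⟨h2, he.symm, fun hc => hne hc.symm⟩
          (Set.mem_image_of_mem F hx2mem)
    obtain ⟨y, hym, hyU, hyV⟩ := hJ U V hUopen hVopen hsubUV hUne hVne
    obtain ⟨n, hnmem, hyn⟩ := Set.mem_iUnion₂.mp hyV
    exact hdisj n1 n h1 hnmem.1 (fun hc => hnmem.2.2 hc.symm) y hyU hyn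
  -- main length bound
  have hbound : ∀ n, 1 ≤ n → w ^ (g n) ≤ 4 * v ^ n / δ + 2 := by
    intro n hn
    set m := g n with hmdef
    have hm1 : 1 ≤ m := (hg n hn).1
    have hwm : (0:ℝ) < w ^ m := by positivity
    set y1 := ap w m + w ^ m / 4 with hy1def
    set y2 := ap w m + 3 * w ^ m / 4 with hy2def
    have hy1 : y1 ∈ Iv w m := by constructor <;> simp [hy1def] <;> linarith
    have hy2 : y2 ∈ Iv w m := by constructor <;> simp [hy2def] <;> linarith
    obtain ⟨k1, hk11, hgk1, x1, hx1, hFx1⟩ := hcover m hm1 y1 hy1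
    obtain ⟨k2, hk21, hgk2, x2, hx2, hFx2⟩ := hcover m hm1 y2 hy2
    have hk1n : k1 = n := hginj k1 n hk11 hn (by rw [hgk1, hmdef])
    have hk2n : k2 = n := hginj k2 n hk21 hn (by rw [hgk2, hmdef])
    have hd := hDiam n hn x1 (hk1n ▸ hx1) x2 (hk2n ▸ hx2)
    rw [hFx1, hFx2] at hd
    have habs : |y1 - y2| = w ^ m / 2 := by
      rw [hy1def, hy2def]
      rw [abs_of_nonpos (by linarith)]; ring
    rw [habs] at hd
    have hq : 4 * v ^ n / δ = 2 * (2 * v ^ n / δ) := by ring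
    linarith
  -- pigeonhole: some n ≤ M has g n ≥ M
  have hpigeon : ∀ M : ℕ, 1 ≤ M → ∃ n, 1 ≤ n ∧ n ≤ M ∧ M ≤ g n := by
    intro M hM
    by_contra hcon
    push_neg at hcon
    have hmaps : ∀ n ∈ Finset.Icc 1 M, g n ∈ Finset.Icc 1 (M - 1) := by
      intro n hn
      rw [Finset.mem_Icc] at hn ⊢
      have := hcon n hn.1 hn.2
      exact ⟨(hg n hn.1).1, by omega⟩
    have hinjOn : Set.InjOn g (Finset.Icc 1 M) := by
      intro a ha b hb hab
      rw [Finset.coe_Icc, Set.mem_Icc] at ha hb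
      exact hginj a b ha.1 hb.1 hab
    have hcard := Finset.card_le_card_of_injOn g hmaps hinjOn
    rw [Nat.card_Icc, Nat.card_Icc] at hcard
    omega
  -- final contradiction
  have hwv1 : (1:ℝ) < w / v := (one_lt_div (by linarith)).mpr hvw
  obtain ⟨M0, hM0⟩ := pow_unbounded_of_one_lt (4 / δ + 2) hwv1
  set M := max M0 1 with hMdef
  have hM1 : 1 ≤ M := le_max_right _ _
  have hMgt : 4 / δ + 2 < (w / v) ^ M :=
    lt_of_lt_of_le hM0 (pow_le_pow_right₀ hwv1.le (le_max_left _ _))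
  obtain ⟨n, hn1, hnM, hMg⟩ := hpigeon M hM1
  have h1 : w ^ M ≤ w ^ (g n) := pow_le_pow_right₀ (by linarith) hMg
  have h2 : w ^ (g n) ≤ 4 * v ^ n / δ + 2 := hbound n hn1
  have h3 : v ^ n ≤ v ^ M := pow_le_pow_right₀ (by linarith) hnM
  have hvM0 : (0:ℝ) < v ^ M := by positivity
  have hvM1 : (1:ℝ) ≤ v ^ M := one_le_pow₀ (by linarith : (1:ℝ) ≤ v)
  have h4 : (w / v) ^ M * v ^ M = w ^ M := by
    rw [div_pow]; field_simp
  have h5 : (4 / δ + 2) * v ^ M < (w / v) ^ M * v ^ M :=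
    mul_lt_mul_of_pos_right hMgt hvM0
  rw [h4] at h5
  have h6 : (4 / δ + 2) * v ^ M = 4 * v ^ M / δ + 2 * v ^ M := by ring
  have h7 : 4 * v ^ n / δ ≤ 4 * v ^ M / δ :=
    div_le_div_of_nonneg_right (by nlinarith : 4 * v ^ n ≤ 4 * v ^ M) hδ0.le
  linarith
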